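/- Let (R, P, X) be a subproblem where R is a clique and every vertex of P ∪ X is adjacent to all of R. If u ∈ P satisfies N(u) ∩ P = ∅ and N(u) ∩ X ≠ ∅, then R ∪ {u} is not a maximal clique of G, and the maximal cliques of G of the form R ∪ S with S ⊆ P coincide with those with S ⊆ P \ {u}. -/

import Mathlib

open SimpleGraph

/-- A maximal clique: a clique not properly contained in any other clique. -/
def MaximalClique {V : Type*} (G : SimpleGraph V) (S : Set V) : Prop :=
  G.IsClique S ∧ ∀ T : Set V, G.IsClique T → S ⊆ T → S = T

/-- The graph obtained from `G` by deleting vertex `u` (removing all its incident edges). -/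
def delVert {V : Type*} (G : SimpleGraph V) (u : V) : SimpleGraph V where
  Adj a b := G.Adj a b ∧ a ≠ u ∧ b ≠ u
  symm := by constructor; intro a b h; exact ⟨h.1.symm, h.2.2, h.2.1⟩
  loopless := by constructor; intro a h; exact (G.ne_of_adj h.1) rfl

theorem stmt_8 {V : Type*} [Fintype V] (G : SimpleGraph V) (R P X : Set V)
    (hR : G.IsClique R)
    (hadj : ∀ x ∈ P ∪ X, ∀ r ∈ R, G.Adj x r)
    (hdisj : Disjoint P X)
    (u : V) (hu : u ∈ P)
    (hP : G.neighborSet u ∩ P = ∅) (hX : (G.neighborSet u ∩ X).Nonempty) :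
    ¬ MaximalClique G (R ∪ {u}) ∧
    {C : Set V | ∃ S ⊆ P, C = R ∪ S ∧ MaximalClique G C} =
      {C : Set V | ∃ S ⊆ P \ {u}, C = R ∪ S ∧ MaximalClique G C} := by

  obtain ⟨x, hxadj, hxX⟩ := hX
  have hxR : x ∉ R := fun h => G.ne_of_adj (hadj x (Or.inr hxX) x h) rfl
  have hxu' : x ≠ u := fun h => (G.ne_of_adj hxadj) h.symm
  have hclique : G.IsClique (R ∪ {u} ∪ {x}) := by
    rintro a ((haR | rfl) | rfl) b ((hbR | rfl) | rfl) hab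
    · exact hR haR hbR hab
    · exact (hadj _ (Or.inl hu) a haR).symm
    · exact (hadj _ (Or.inr hxX) a haR).symm
    · exact hadj _ (Or.inl hu) b hbR
    · exact absurd rfl hab
    · exact hxadj
    · exact hadj _ (Or.inr hxX) b hbR
    · exact hxadj.symm
    · exact absurd rfl hab
  have part1 : ¬ MaximalClique G (R ∪ {u}) := by
    rintro ⟨hcl, hmax⟩
    have heq := hmax (R ∪ {u} ∪ {x}) hclique Set.subset_union_left
    have hxin : x ∈ R ∪ {u} := heq ▸ (Or.inr rfl : x ∈ R ∪ {u} ∪ {x})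
    rcases hxin with h | h
    · exact hxR h
    · exact hxu' h
  refine ⟨part1, Set.ext fun C => ⟨?_, ?_⟩⟩
  · rintro ⟨S, hS, rfl, hmax⟩
    by_cases huS : u ∈ S
    · exfalso
      have hSu : S = {u} := by
        ext s
        refine ⟨fun hs => ?_, fun hs => hs ▸ huS⟩
        by_contra hsu
        have hadj' : G.Adj u s := hmax.1 (Or.inr huS) (Or.inr hs) (Ne.symm hsu)
        have : s ∈ G.neighborSet u ∩ P := ⟨hadj', hS hs⟩
        simp [hP] at this
      exact part1 (hSu ▸ hmax)
    · exact ⟨S, fun s hs => ⟨hS hs, fun h => huS (h ▸ hs)⟩, rfl, hmax⟩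
  · rintro ⟨S, hS, rfl, hmax⟩
    exact ⟨S, fun s hs => (hS hs).1, rfl, hmax⟩
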